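/- Let x₁ ≠ x₂ be real numbers, let p, q ≥ 1 and N ≥ 1 be integers, let C > 0, and let B : ℝ → ℂ be measurable with |B(x)| ≤ C · min(1, |x − x₁|^p) · min(1, |x − x₂|^q) for all x. Then lim_{ε→0⁺} ε^{p+q−1} ∫_{−∞}^{+∞} |x − x₁|^{−p} |x − x₂|^{−q} e^{−((x−x₁)/ε)^{2N}} e^{−((x−x₂)/ε)^{2N}} |B(x)| dx = 0. -/

import Mathlib

open Filter MeasureTheory

lemma aux_inv_min (a : ℝ) (ha : 0 ≤ a) (p : ℕ) (hp : 1 ≤ p) :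
    a ^ (-(p : ℤ)) * min 1 (a ^ p) ≤ 1 := by
  rcases eq_or_lt_of_le ha with h | h
  · rw [← h, zero_zpow _ (by omega : -(p:ℤ) ≠ 0), zero_mul]
    exact zero_le_one
  · rw [zpow_neg, zpow_natCast]
    calc (a ^ p)⁻¹ * min 1 (a ^ p) ≤ (a ^ p)⁻¹ * (a ^ p) :=
          mul_le_mul_of_nonneg_left (min_le_right _ _) (by positivity)
      _ = 1 := inv_mul_cancel₀ (by positivity)

lemma aux_exp_bound (u : ℝ) (N : ℕ) (hN : 1 ≤ N) :
    Real.exp (-(u ^ (2 * N))) ≤ Real.exp 1 * Real.exp (-(u ^ 2)) := by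
  rw [← Real.exp_add, Real.exp_le_exp]
  have hu : u ^ (2 * N) = (u ^ 2) ^ N := by rw [pow_mul]
  rcases le_or_gt (u ^ 2) 1 with h | h
  · have : (0:ℝ) ≤ (u ^ 2) ^ N := by positivity
    nlinarith
  · have h1 : u ^ 2 ≤ (u ^ 2) ^ N := by
      calc u ^ 2 = (u ^ 2) ^ 1 := (pow_one _).symm
        _ ≤ (u ^ 2) ^ N := pow_le_pow_right₀ h.le hN
    nlinarith

theorem stmt_7 (x₁ x₂ : ℝ) (hx : x₁ ≠ x₂) (p q N : ℕ) (hp : 1 ≤ p) (hq : 1 ≤ q)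
    (hN : 1 ≤ N) (C : ℝ) (hC : 0 < C) (B : ℝ → ℂ) (hmeas : Measurable B)
    (hbd : ∀ x : ℝ, ‖B x‖ ≤ C * min 1 (|x - x₁| ^ p) * min 1 (|x - x₂| ^ q)) :
    Tendsto (fun ε : ℝ => ε ^ (p + q - 1) * ∫ x : ℝ,
        |x - x₁| ^ (-(p : ℤ)) * |x - x₂| ^ (-(q : ℤ))
          * Real.exp (-(((x - x₁) / ε) ^ (2 * N)))
          * Real.exp (-(((x - x₂) / ε) ^ (2 * N)))
          * ‖B x‖)
      (nhdsWithin 0 (Set.Ioi 0)) (nhds 0) := by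
  set K : ℝ := C * Real.exp 1 * Real.sqrt Real.pi with hK
  have hKpos : 0 < K := by positivity
  -- the squeeze
  apply squeeze_zero'
  · filter_upwards [self_mem_nhdsWithin] with ε (hε : 0 < ε)
    apply mul_nonneg (by positivity)
    apply integral_nonneg
    intro x
    positivity
  · filter_upwards [self_mem_nhdsWithin] with ε (hε : 0 < ε)
    have hεne : ε ≠ 0 := ne_of_gt hε
    have hb : (0:ℝ) < ε⁻¹ ^ 2 := by positivity
    -- integrable majorant
    have hint : Integrable (fun x : ℝ => C * Real.exp 1 *
        Real.exp (-(ε⁻¹ ^ 2 * (x - x₁) ^ 2))) := by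
      have := (integrable_exp_neg_mul_sq hb).comp_sub_right x₁
      simpa [neg_mul] using this.const_mul (C * Real.exp 1)
    have hle : ∫ x : ℝ,
        |x - x₁| ^ (-(p : ℤ)) * |x - x₂| ^ (-(q : ℤ))
          * Real.exp (-(((x - x₁) / ε) ^ (2 * N)))
          * Real.exp (-(((x - x₂) / ε) ^ (2 * N)))
          * ‖B x‖
        ≤ ∫ x : ℝ, C * Real.exp 1 * Real.exp (-(ε⁻¹ ^ 2 * (x - x₁) ^ 2)) := by
      apply integral_mono_of_nonneg
      · filter_upwards with x; positivity
      · exact hint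
      · filter_upwards with x
        have h1 : |x - x₁| ^ (-(p : ℤ)) * min 1 (|x - x₁| ^ p) ≤ 1 :=
          aux_inv_min _ (abs_nonneg _) p hp
        have h2 : |x - x₂| ^ (-(q : ℤ)) * min 1 (|x - x₂| ^ q) ≤ 1 :=
          aux_inv_min _ (abs_nonneg _) q hq
        have h3 : Real.exp (-(((x - x₁) / ε) ^ (2 * N)))
            ≤ Real.exp 1 * Real.exp (-(ε⁻¹ ^ 2 * (x - x₁) ^ 2)) := by
          have := aux_exp_bound ((x - x₁) / ε) N hN
          have harg : ((x - x₁) / ε) ^ 2 = ε⁻¹ ^ 2 * (x - x₁) ^ 2 := by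
            field_simp
          rwa [harg] at this
        have h4 : Real.exp (-(((x - x₂) / ε) ^ (2 * N))) ≤ 1 :=
          Real.exp_le_one_iff.mpr (neg_nonpos.mpr ((even_two_mul N).pow_nonneg _))
        calc |x - x₁| ^ (-(p : ℤ)) * |x - x₂| ^ (-(q : ℤ))
              * Real.exp (-(((x - x₁) / ε) ^ (2 * N)))
              * Real.exp (-(((x - x₂) / ε) ^ (2 * N)))
              * ‖B x‖
            ≤ |x - x₁| ^ (-(p : ℤ)) * |x - x₂| ^ (-(q : ℤ))
              * Real.exp (-(((x - x₁) / ε) ^ (2 * N)))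
              * Real.exp (-(((x - x₂) / ε) ^ (2 * N)))
              * (C * min 1 (|x - x₁| ^ p) * min 1 (|x - x₂| ^ q)) :=
              mul_le_mul_of_nonneg_left (hbd x) (by positivity)
          _ = (|x - x₁| ^ (-(p : ℤ)) * min 1 (|x - x₁| ^ p))
              * (|x - x₂| ^ (-(q : ℤ)) * min 1 (|x - x₂| ^ q))
              * Real.exp (-(((x - x₂) / ε) ^ (2 * N)))
              * (C * Real.exp (-(((x - x₁) / ε) ^ (2 * N)))) := by ring
          _ ≤ 1 * 1 * 1 * (C * (Real.exp 1 * Real.exp (-(ε⁻¹ ^ 2 * (x - x₁) ^ 2)))) := by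
              exact mul_le_mul
                (mul_le_mul (mul_le_mul h1 h2 (by positivity) zero_le_one) h4
                  (by positivity) (by positivity))
                (mul_le_mul_of_nonneg_left h3 hC.le) (by positivity) (by positivity)
          _ = C * Real.exp 1 * Real.exp (-(ε⁻¹ ^ 2 * (x - x₁) ^ 2)) := by ring
    have hval : ∫ x : ℝ, C * Real.exp 1 * Real.exp (-(ε⁻¹ ^ 2 * (x - x₁) ^ 2)) = K * ε := by
      have hshift : ∫ x : ℝ, Real.exp (-(ε⁻¹ ^ 2) * (x - x₁) ^ 2)
          = ∫ x : ℝ, Real.exp (-(ε⁻¹ ^ 2) * x ^ 2) :=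
        integral_sub_right_eq_self (fun x => Real.exp (-(ε⁻¹ ^ 2) * x ^ 2)) x₁
      rw [integral_const_mul]
      simp only [← neg_mul]
      rw [hshift, integral_gaussian]
      have : Real.pi / ε⁻¹ ^ 2 = Real.pi * ε ^ 2 := by field_simp
      rw [this, Real.sqrt_mul Real.pi_nonneg, Real.sqrt_sq hε.le, hK]
      ring
    calc ε ^ (p + q - 1) * ∫ x : ℝ,
          |x - x₁| ^ (-(p : ℤ)) * |x - x₂| ^ (-(q : ℤ))
            * Real.exp (-(((x - x₁) / ε) ^ (2 * N)))
            * Real.exp (-(((x - x₂) / ε) ^ (2 * N)))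
            * ‖B x‖
        ≤ ε ^ (p + q - 1) * (K * ε) := by
          rw [← hval]; exact mul_le_mul_of_nonneg_left hle (by positivity)
      _ = K * ε ^ (p + q) := by
          rw [mul_comm K ε, ← mul_assoc, ← pow_succ, Nat.sub_add_cancel (by omega)]
          ring
  · have : Tendsto (fun ε : ℝ => K * ε ^ (p + q)) (nhds 0) (nhds (K * 0 ^ (p + q))) :=
      (continuous_const.mul (continuous_pow _)).tendsto 0
    rw [zero_pow (by omega), mul_zero] at this
    exact this.mono_left nhdsWithin_le_nhds
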